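/- For every integer k > 2, the class REG/n(2) of languages recognized by a deterministic finite automaton with a binary advice track is strictly contained in the class REG/n(k) of languages recognized by a deterministic finite automaton with a k-ary advice track: REG/n(2) ⊆ REG/n(k), and there exists a language over the k-symbol alphabet that is in REG/n(k) but not in REG/n(2). -/

import Mathlib

/-- The marked word: the i-th symbol of `w` becomes `(w_i, true)` if `i ∈ S`,
and `(w_i, false)` otherwise. -/
def markWord {α : Type*} (w : List α) (S : Finset ℕ) : List (α × Bool) :=
  (List.zip (List.range w.length) w).map (fun p => (p.2, decide (p.1 ∈ S)))

/-- `L` is recognized by a deterministic finite automaton with at most `a n`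
inkdots of advice on inputs of length `n`. -/
def RecognizedWithInkdots {α : Type*} (L : Set (List α)) (a : ℕ → ℕ) : Prop :=
  ∃ (σ : Type) (_ : Fintype σ) (M : DFA (α × Bool) σ) (h : ℕ → Finset ℕ),
    (∀ n, ∀ i ∈ h n, i < n) ∧
    (∀ n, (h n).card ≤ a n) ∧
    (∀ w : List α, w ∈ L ↔ markWord w (h w.length) ∈ M.accepts)
/-- `L` is recognized by a deterministic finite automaton with a `t`-ary advice track. -/
def RecognizedWithAdviceTrack {α : Type*} (L : Set (List α)) (t : ℕ) : Prop :=
  ∃ (σ : Type) (_ : Fintype σ) (M : DFA (α × Fin t) σ) (h : (n : ℕ) → Fin n → Fin t),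
    ∀ w : List α, w ∈ L ↔
      (List.ofFn (fun i : Fin w.length => (w.get i, h w.length i))) ∈ M.accepts

lemma eq_ofFn_iff {α : Type*} (w : List α) (f : Fin w.length → α) :
    w = List.ofFn f ↔ ∀ i, w.get i = f i := by
  rw [List.ext_get_iff]
  constructor
  · rintro ⟨-, h⟩ i
    simpa [List.get_ofFn] using h i.val i.isLt (by simp)
  · intro h
    refine ⟨by simp, fun n h1 h2 => ?_⟩
    simpa [List.get_ofFn] using h ⟨n, h1⟩

lemma foldl_and {β : Type*} (d : β → Bool) :
    ∀ (l : List β) (b : Bool), l.foldl (fun s p => s && d p) b = (b && l.all d)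
  | [], b => by simp
  | p :: l, b => by simp [foldl_and d l, Bool.and_assoc]

lemma relabel {A σ τ : Type*} (e : σ ≃ τ) (M : DFA A σ) :
    ∃ M' : DFA A τ, M'.accepts = M.accepts := by
  refine ⟨⟨fun s a => e (M.step (e.symm s) a), e M.start, e.symm ⁻¹' M.accept⟩, ?_⟩
  have key : ∀ (l : List A) (s : σ),
      List.foldl (fun s a => e (M.step (e.symm s) a)) (e s) l = e (List.foldl M.step s l) := by
    intro l
    induction l with
    | nil => intro s; rfl
    | cons a l ih =>
        intro s
        simp only [List.foldl_cons]
        rw [Equiv.symm_apply_apply]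
        exact ih _
  ext l
  simp [DFA.mem_accepts, DFA.eval, DFA.evalFrom, key]

instance (k : ℕ) : Countable (Σ m : ℕ, DFA (Fin k × Fin 2) (Fin m)) := by
  have : ∀ m, Countable (DFA (Fin k × Fin 2) (Fin m)) := by
    intro m
    have hinj : Function.Injective
        (fun M : DFA (Fin k × Fin 2) (Fin m) => (M.step, M.start, M.accept)) := by
      rintro ⟨s1, st1, a1⟩ ⟨s2, st2, a2⟩ h
      simp only [Prod.mk.injEq] at h
      obtain ⟨h1, h2, h3⟩ := h
      subst h1; subst h2; subst h3; rfl
    exact hinj.countable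
  infer_instance

/-- `u` is a "bad" word of length `n` for machine `M` if some binary advice makes `M`
accept exactly the singleton `{u}` among length-`n` words. -/
def IsBad (k n : ℕ) (M : Σ m : ℕ, DFA (Fin k × Fin 2) (Fin m)) (u : Fin n → Fin k) : Prop :=
  ∃ v : Fin n → Fin 2, ∀ (w : List (Fin k)) (hw : w.length = n),
    ((List.ofFn fun i : Fin w.length => (w.get i, v (Fin.cast hw i))) ∈ M.2.accepts
      ↔ w = List.ofFn u)

lemma exists_good (k : ℕ) (hk : 2 < k) (n : ℕ) (hn : 1 ≤ n)
    (M : Σ m : ℕ, DFA (Fin k × Fin 2) (Fin m)) :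
    ∃ u : Fin n → Fin k, ¬ IsBad k n M u := by
  by_contra hcon
  push_neg at hcon
  choose g hg using hcon
  have hinj : Function.Injective g := by
    intro u u' he
    have h1 := hg u (List.ofFn u) List.length_ofFn
    have h2 := hg u' (List.ofFn u) List.length_ofFn
    rw [he] at h1
    exact List.ofFn_injective (h2.mp (h1.mpr rfl))
  have hle := Fintype.card_le_of_injective g hinj
  simp only [Fintype.card_fun, Fintype.card_fin] at hle
  exact absurd hle (Nat.pow_lt_pow_left hk (by omega)).not_ge

/-- for every `k > 2`, `REG/n(2) ⊊ REG/n(k)` over the `k`-symbol alphabet. -/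
theorem binary_track_strictly_weaker (k : ℕ) (hk : 2 < k) :
    (∀ L : Set (List (Fin k)),
        RecognizedWithAdviceTrack L 2 → RecognizedWithAdviceTrack L k) ∧
    ∃ L : Set (List (Fin k)),
      RecognizedWithAdviceTrack L k ∧ ¬ RecognizedWithAdviceTrack L 2 := by
  constructor
  · -- inclusion
    rintro L ⟨σ, inst, M, h, hM⟩
    refine ⟨σ, inst,
      ⟨fun s p => M.step s (p.1, if h2 : (p.2 : ℕ) < 2 then (⟨p.2, h2⟩ : Fin 2) else 0),
        M.start, M.accept⟩,
      fun n i => Fin.castLE hk.le (h n i), fun w => ?_⟩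
    rw [hM w]
    have key : ∀ (l : List (Fin k × Fin 2)) (s : σ),
        List.foldl
          (fun s p => M.step s (p.1, if h2 : (p.2 : ℕ) < 2 then (⟨p.2, h2⟩ : Fin 2) else 0))
          s (l.map fun p => (p.1, Fin.castLE hk.le p.2)) = List.foldl M.step s l := by
      intro l
      induction l with
      | nil => intro s; rfl
      | cons p l ih =>
          intro s
          simp only [List.map_cons, List.foldl_cons]
          rw [show (if h2 : ((Fin.castLE hk.le p.2 : Fin k) : ℕ) < 2 then (⟨_, h2⟩ : Fin 2) else 0)
                = p.2 by simp [Fin.coe_castLE]; intro h1; exact absurd p.2.isLt (by omega)]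
          exact ih _
    have hword : (List.ofFn fun i : Fin w.length => (w.get i, Fin.castLE hk.le (h w.length i)))
        = (List.ofFn fun i : Fin w.length => (w.get i, h w.length i)).map
            (fun p => (p.1, Fin.castLE hk.le p.2)) := by
      rw [List.map_ofFn]; rfl
    simp only [DFA.mem_accepts, DFA.eval, DFA.evalFrom, hword, key]
  · -- separation
    have : Nonempty (Σ m : ℕ, DFA (Fin k × Fin 2) (Fin m)) :=
      ⟨⟨1, ⟨fun s _ => s, 0, ∅⟩⟩⟩
    obtain ⟨f, hf⟩ := exists_surjective_nat (Σ m : ℕ, DFA (Fin k × Fin 2) (Fin m))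
    have hx : ∀ n : ℕ, ∃ u : Fin n → Fin k, 1 ≤ n → ¬ IsBad k n (f (n - 1)) u := by
      intro n
      rcases Nat.eq_zero_or_pos n with h0 | h1
      · subst h0
        exact ⟨Fin.elim0, fun hcon => absurd hcon (by omega)⟩
      · obtain ⟨u, hu⟩ := exists_good k hk n h1 (f (n - 1))
        exact ⟨u, fun _ => hu⟩
    choose x hxg using hx
    refine ⟨{w | w = List.ofFn (x w.length)}, ?_, ?_⟩
    · -- in REG/n(k)
      refine ⟨Bool, inferInstance,
        ⟨fun s p => s && decide (p.1 = p.2), true, {true}⟩, x, fun w => ?_⟩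
      have hacc : ∀ l : List (Fin k × Fin k),
          l ∈ DFA.accepts ⟨fun s p => s && decide (p.1 = p.2), true, ({true} : Set Bool)⟩
            ↔ ∀ p ∈ l, p.1 = p.2 := by
        intro l
        rw [DFA.mem_accepts]
        show List.foldl _ true l ∈ ({true} : Set Bool) ↔ _
        simp [foldl_and, List.all_eq_true]
      rw [hacc]
      show w = List.ofFn (x w.length) ↔ _
      rw [eq_ofFn_iff]
      simp [List.forall_mem_ofFn_iff]
    · -- not in REG/n(2)
      rintro ⟨σ, inst, M, h, hM⟩
      obtain ⟨M', hM'⟩ := relabel (Fintype.equivFin σ) M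
      obtain ⟨j, hj⟩ := hf ⟨Fintype.card σ, M'⟩
      obtain ⟨n, hn1, hnf⟩ :
          ∃ n, 1 ≤ n ∧ f (n - 1) = ⟨Fintype.card σ, M'⟩ := ⟨j + 1, by omega, by simpa using hj⟩
      have hbad := hxg n hn1
      rw [hnf] at hbad
      refine hbad ⟨h n, fun w hw => ?_⟩
      show _ ∈ M'.accepts ↔ _
      rw [hM']
      subst hw
      simp only [Fin.cast_refl, id_eq]
      rw [← hM w]
      rfl
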